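/- For any infinitary propositional formulas F, G over σ and any set A ⊆ σ of atoms disjoint from the set P(G) of strictly positive atoms of G: an interpretation I is an A-stable model of F ∧ G if and only if I is an A-stable model of F and I satisfies G. -/

import Mathlib

/-- Infinitary propositional formulas over signature `σ`:
atoms, conjunctions and disjunctions of (index-)sets of formulas, implication. -/
inductive Formula (σ : Type) : Type 1
  | atom : σ → Formula σ
  | conj : (ι : Type) → (ι → Formula σ) → Formula σ
  | disj : (ι : Type) → (ι → Formula σ) → Formula σ
  | imp : Formula σ → Formula σ → Formula σ

namespace Formula

variable {σ : Type}

/-- `⊥` is the empty disjunction. -/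
def bot : Formula σ := Formula.disj Empty (fun e => e.elim)

/-- Binary conjunction `F ∧ G`. -/
def and (F G : Formula σ) : Formula σ := Formula.conj Bool (fun b => if b then F else G)

/-- Binary disjunction `F ∨ G`. -/
def or (F G : Formula σ) : Formula σ := Formula.disj Bool (fun b => if b then F else G)

/-- Negation `¬F` abbreviates `F → ⊥`. -/
def neg (F : Formula σ) : Formula σ := Formula.imp F bot

/-- Conjunction of a set of atoms. -/
def conjAtoms (S : Set σ) : Formula σ := Formula.conj S (fun p => Formula.atom p.val)

/-- Satisfaction of an infinitary formula by an interpretation `I ⊆ σ`. -/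
def Sat (I : Set σ) : Formula σ → Prop
  | .atom p => p ∈ I
  | .conj _ f => ∀ i, Sat I (f i)
  | .disj _ f => ∃ i, Sat I (f i)
  | .imp F G => Sat I F → Sat I G

open Classical in
/-- The reduct `F^I`. -/
noncomputable def reduct (I : Set σ) : Formula σ → Formula σ
  | .atom p => if p ∈ I then Formula.atom p else bot
  | .conj ι f => Formula.conj ι (fun i => reduct I (f i))
  | .disj ι f => Formula.disj ι (fun i => reduct I (f i))
  | .imp F G => if Sat I (Formula.imp F G) then Formula.imp (reduct I F) (reduct I G) else bot

/-- `I` is an `A`-stable model of `F`: `I` is minimal w.r.t. `≤_A`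
(`J ≤_A I` iff `J ⊆ I` and `I \ J ⊆ A`) among interpretations satisfying `F^I`. -/
def AStable (A : Set σ) (I : Set σ) (F : Formula σ) : Prop :=
  Sat I (reduct I F) ∧ ∀ J : Set σ, J ⊆ I → I \ J ⊆ A → Sat J (reduct I F) → J = I

/-- A stable model is a `σ`-stable model. -/
def Stable (I : Set σ) (F : Formula σ) : Prop := AStable Set.univ I F

/-- The strictly positive atoms `P(F)`. -/
def spos : Formula σ → Set σ
  | .atom p => {p}
  | .conj _ f => ⋃ i, spos (f i)
  | .disj _ f => ⋃ i, spos (f i)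
  | .imp _ H => spos H

/-- `F` is (syntactically) the formula `⊥`, i.e. an empty disjunction. -/
def IsBot : Formula σ → Prop
  | .disj ι _ => IsEmpty ι
  | _ => False

open Classical in
mutual
/-- Positive nonnegated atoms `Pnn(F)`. -/
noncomputable def pnn : Formula σ → Set σ
  | .atom p => {p}
  | .conj _ f => ⋃ i, pnn (f i)
  | .disj _ f => ⋃ i, pnn (f i)
  | .imp G H => if IsBot H then ∅ else nnn G ∪ pnn H

/-- Negative nonnegated atoms `Nnn(F)`. -/
noncomputable def nnn : Formula σ → Set σ
  | .atom _ => ∅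
  | .conj _ f => ⋃ i, nnn (f i)
  | .disj _ f => ⋃ i, nnn (f i)
  | .imp G H => if IsBot H then ∅ else pnn G ∪ nnn H
end

/-- The rules of a formula, as antecedent/consequent pairs. -/
def rules : Formula σ → Set (Formula σ × Formula σ)
  | .atom _ => ∅
  | .conj _ f => ⋃ i, rules (f i)
  | .disj _ f => ⋃ i, rules (f i)
  | .imp G H => insert (G, H) (rules H)

/-- Edge relation of the positive dependency graph `DG_A[F]` (vertex set `A`). -/
noncomputable def DGEdge (F : Formula σ) (A : Set σ) (p q : σ) : Prop :=
  p ∈ A ∧ q ∈ A ∧ ∃ R ∈ rules F, p ∈ spos R.2 ∧ q ∈ pnn R.1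

/-- The atoms occurring in a formula. -/
def atoms : Formula σ → Set σ
  | .atom p => {p}
  | .conj _ f => ⋃ i, atoms (f i)
  | .disj _ f => ⋃ i, atoms (f i)
  | .imp G H => atoms G ∪ atoms H

/-- `G` is a definition for the set `Q` of atoms: a conjunction of formulas
`H ∧ C^∧ → q` with `q ∈ Q`, `C ⊆ Q`, and no atom of `Q` occurring in `H`. -/
def IsDefinition (Q : Set σ) (G : Formula σ) : Prop :=
  ∃ (ι : Type) (g : ι → Formula σ), G = Formula.conj ι g ∧
    ∀ i, ∃ (H : Formula σ) (C : Set σ) (q : σ),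
      q ∈ Q ∧ C ⊆ Q ∧ (∀ p ∈ Q, p ∉ atoms H) ∧
      g i = Formula.imp (Formula.and H (conjAtoms C)) (Formula.atom q)

end Formula

section Graph

variable {V : Type*}

/-- An infinite walk in the directed graph with edge relation `E`. -/
def IsInfWalk (E : V → V → Prop) (w : ℕ → V) : Prop := ∀ i, E (w i) (w (i + 1))

/-- The partition `{P₁, P₂}` is infinitely separable: every infinite walk
visits `P₁` or `P₂` only finitely often. -/
def InfSeparable (E : V → V → Prop) (P1 P2 : Set V) : Prop :=
  ∀ w : ℕ → V, IsInfWalk E w → {i | w i ∈ P1}.Finite ∨ {i | w i ∈ P2}.Finite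

/-- `u` and `v` are in the same strongly connected component:
each is reachable from the other. -/
def SameSCC (E : V → V → Prop) (u v : V) : Prop :=
  Relation.ReflTransGen E u v ∧ Relation.ReflTransGen E v u

/-- The partition `{P₁, P₂}` is separable: every strongly connected
component is contained in `P₁` or in `P₂`. -/
def Separable (E : V → V → Prop) (P1 P2 : Set V) : Prop :=
  ∀ u v, SameSCC E u v → ((u ∈ P1 ∧ v ∈ P1) ∨ (u ∈ P2 ∧ v ∈ P2))

end Graph

namespace Formula

lemma not_sat_bot {σ : Type} (I : Set σ) : ¬ Sat I (bot : Formula σ) := by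
  rintro ⟨i, _⟩; exact i.elim

lemma sat_reduct_iff {σ : Type} (I : Set σ) (F : Formula σ) :
    Sat I (reduct I F) ↔ Sat I F := by
  induction F with
  | atom p =>
    by_cases h : p ∈ I <;> simp [reduct, h, Sat, not_sat_bot]
  | conj ι f ih => simp only [reduct, Sat]; exact forall_congr' fun i => ih i
  | disj ι f ih => simp only [reduct, Sat]; exact exists_congr fun i => ih i
  | imp F G ihF ihG =>
    by_cases h : Sat I (Formula.imp F G)
    · simp only [Sat] at h
      simp only [reduct, if_pos h, Sat]
      constructor
      · intro _ _; exact h ‹_›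
      · intro hh; show Sat I (reduct I (Formula.imp F G)); rw [reduct, if_pos (show Sat I (Formula.imp F G) from h)]; intro hF; exact (ihG).2 (hh (ihF.1 hF))
    · simp only [reduct, if_neg h]
      exact iff_of_false (not_sat_bot I) h

lemma sat_of_sat_reduct {σ : Type} {I J : Set σ} (hJI : J ⊆ I) (F : Formula σ) :
    Sat J (reduct I F) → Sat I F := by
  induction F with
  | atom p =>
    by_cases h : p ∈ I <;> simp [reduct, h, Sat, not_sat_bot]
  | conj ι f ih => intro h i; exact ih i (h i)
  | disj ι f ih => rintro ⟨i, hi⟩; exact ⟨i, ih i hi⟩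
  | imp F G ihF ihG =>
    by_cases h : Sat I (Formula.imp F G)
    · intro _; exact h
    · simp only [reduct, if_neg h]; exact fun hb => absurd hb (not_sat_bot J)

lemma sat_reduct_of_le {σ : Type} {A I J : Set σ} (hJI : J ⊆ I) (hd : I \ J ⊆ A)
    (G : Formula σ) (hA : Disjoint A (spos G)) (hI : Sat I G) :
    Sat J (reduct I G) := by
  induction G with
  | atom p =>
    have hp : p ∈ J := by
      by_contra hpJ
      exact hA.ne_of_mem (hd ⟨hI, hpJ⟩) (rfl : p ∈ spos (Formula.atom p)) rfl
    simp [reduct, hJI hp, Sat, hp]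
  | conj ι f ih =>
    intro i
    exact ih i (hA.mono_right (Set.subset_iUnion (fun i => spos (f i)) i)) (hI i)
  | disj ι f ih =>
    obtain ⟨i, hi⟩ := hI
    exact ⟨i, ih i (hA.mono_right (Set.subset_iUnion (fun i => spos (f i)) i)) hi⟩
  | imp F G ihF ihG =>
    simp only [reduct, if_pos hI]
    intro hJF
    exact ihG hA (hI (sat_of_sat_reduct hJI F hJF))

lemma sat_reduct_and {σ : Type} (I J : Set σ) (F G : Formula σ) :
    Sat J (reduct I (Formula.and F G)) ↔ Sat J (reduct I F) ∧ Sat J (reduct I G) := by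
  constructor
  · intro h; exact ⟨by simpa using h true, by simpa using h false⟩
  · rintro ⟨h1, h2⟩ b; cases b <;> simpa

end Formula

/-- if `A` is disjoint from `P(G)`, then `I` is an `A`-stable
model of `F ∧ G` iff `I` is an `A`-stable model of `F` and `I ⊨ G`. -/
theorem astable_and_of_disjoint_spos {σ : Type} (F G : Formula σ) (A : Set σ)
    (hA : Disjoint A (Formula.spos G)) (I : Set σ) :
    Formula.AStable A I (Formula.and F G) ↔
      Formula.AStable A I F ∧ Formula.Sat I G := by
  constructor
  · rintro ⟨hsat, hmin⟩
    have h1 := (Formula.sat_reduct_and I I F G).1 hsat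
    have hIG : Formula.Sat I G := (Formula.sat_reduct_iff I G).1 h1.2
    refine ⟨⟨h1.1, fun J hJI hd hJ => ?_⟩, hIG⟩
    exact hmin J hJI hd ((Formula.sat_reduct_and I J F G).2
      ⟨hJ, Formula.sat_reduct_of_le hJI hd G hA hIG⟩)
  · rintro ⟨⟨hsat, hmin⟩, hIG⟩
    refine ⟨(Formula.sat_reduct_and I I F G).2
      ⟨hsat, (Formula.sat_reduct_iff I G).2 hIG⟩, fun J hJI hd hJ => ?_⟩
    exact hmin J hJI hd ((Formula.sat_reduct_and I J F G).1 hJ).1
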